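/- arXiv:1312.1137 — 5 statements merged into one kernel-verified Lean document; each statement's English description precedes it below -/
import Mathlib

section
/- Let F be a probability distribution function on the reals and for times 0 ≤ t_1 ≤ ... ≤ t_l define F_{t_1,...,t_l}(x_1,...,x_l) = F^{t_1}(min(x_1,...,x_l)) · F^{t_2-t_1}(min(x_2,...,x_l)) ··· F^{t_l-t_{l-1}}(x_l). Then this family of finite dimensional distributions is consistent: integrating out (taking x_i → ∞ in) any coordinate yields the corresponding lower-dimensional distribution of the same form. -/
open Filter Finset

/-- The finite-dimensional distribution function of an `F`-extremal process:
`F_{t_1,…,t_l}(x_1,…,x_l) = ∏_i F(min_{j ≥ i} x_j)^{t_i - t_{i-1}}` (with `t_0 = 0`). -/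
noncomputable def extremalFdd (F : ℝ → ℝ) (l : ℕ) (t x : Fin l → ℝ) : ℝ :=
  ∏ i : Fin l,
    (F ((Finset.Ici i).inf' ⟨i, Finset.mem_Ici.mpr le_rfl⟩ x)) ^
      (t i - if (i : ℕ) = 0 then 0 else t ⟨i.1 - 1, Nat.lt_of_le_of_lt (Nat.sub_le i.1 1) i.isLt⟩)

lemma inf'_set_congr {β : Type*} [SemilatticeInf β] {ι : Type*} {s₁ s₂ : Finset ι}
    (h : s₁ = s₂) (h₁ : s₁.Nonempty) (f : ι → β) :
    s₁.inf' h₁ f = s₂.inf' (h ▸ h₁) f := by subst h; rfl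

lemma inf'_update_of_forall_le {n : ℕ} (x : Fin n → ℝ) (k : Fin n) (y : ℝ)
    (hy : ∀ j, x j ≤ y) (s : Finset (Fin n)) (h' : (s.erase k).Nonempty) :
    s.inf' (h'.mono (Finset.erase_subset _ _)) (Function.update x k y)
      = (s.erase k).inf' h' x := by
  apply le_antisymm
  · apply Finset.le_inf'
    intro j hj
    have hjk : j ≠ k := Finset.ne_of_mem_erase hj
    have := Finset.inf'_le (Function.update x k y) (Finset.mem_of_mem_erase hj)
    rwa [Function.update_of_ne hjk] at this
  · apply Finset.le_inf'
    intro j hj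
    by_cases hjk : j = k
    · subst hjk
      rw [Function.update_self]
      obtain ⟨j0, hj0⟩ := h'
      exact le_trans (Finset.inf'_le x hj0) (hy j0)
    · rw [Function.update_of_ne hjk]
      exact Finset.inf'_le x (Finset.mem_erase.mpr ⟨hjk, hj⟩)

lemma image_succAbove_Ici {m : ℕ} (k : Fin (m + 1)) (i : Fin m) :
    (Finset.Ici i).image k.succAbove = (Finset.Ici (k.succAbove i)).erase k := by
  ext j
  simp only [Finset.mem_image, Finset.mem_Ici, Finset.mem_erase]
  constructor
  · rintro ⟨j', hj', rfl⟩
    exact ⟨Fin.succAbove_ne _ _, Fin.succAbove_le_succAbove_iff.mpr hj'⟩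
  · rintro ⟨hjk, hij⟩
    obtain ⟨j', rfl⟩ := Fin.exists_succAbove_eq hjk
    exact ⟨j', Fin.succAbove_le_succAbove_iff.mp hij, rfl⟩

lemma val_succAbove' {m : ℕ} (k : Fin (m + 1)) (i : Fin m) :
    (k.succAbove i : ℕ) = if i.1 < k.1 then i.1 else i.1 + 1 := by
  rcases lt_or_ge (Fin.castSucc i) k with h | h
  · rw [Fin.succAbove_of_castSucc_lt _ _ h]
    have : i.1 < k.1 := h
    simp [this]
  · rw [Fin.succAbove_of_le_castSucc _ _ h]
    have : ¬ i.1 < k.1 := not_lt.mpr h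
    simp [this]

lemma inf'_update_succAbove {m : ℕ} (x : Fin (m + 1) → ℝ) (k : Fin (m + 1)) (y : ℝ)
    (hy : ∀ j, x j ≤ y) (i : Fin m) :
    (Finset.Ici (k.succAbove i)).inf' ⟨k.succAbove i, Finset.mem_Ici.mpr le_rfl⟩
        (Function.update x k y)
      = (Finset.Ici i).inf' ⟨i, Finset.mem_Ici.mpr le_rfl⟩ (x ∘ k.succAbove) := by
  have herase : ((Finset.Ici (k.succAbove i)).erase k).Nonempty :=
    ⟨k.succAbove i, Finset.mem_erase.mpr ⟨Fin.succAbove_ne _ _, Finset.mem_Ici.mpr le_rfl⟩⟩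
  calc (Finset.Ici (k.succAbove i)).inf' ⟨k.succAbove i, Finset.mem_Ici.mpr le_rfl⟩
        (Function.update x k y)
      = ((Finset.Ici (k.succAbove i)).erase k).inf' herase x :=
        inf'_update_of_forall_le x k y hy _ herase
    _ = ((Finset.Ici i).image k.succAbove).inf'
          ((image_succAbove_Ici k i).symm ▸ herase) x :=
        inf'_set_congr (image_succAbove_Ici k i).symm herase x
    _ = (Finset.Ici i).inf' ⟨i, Finset.mem_Ici.mpr le_rfl⟩ (x ∘ k.succAbove) :=
        Finset.inf'_image _ _

lemma exponent_eq {m : ℕ} (t : Fin (m + 1) → ℝ) (k : Fin (m + 1)) (i : Fin m)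
    (hik : i.1 ≠ k.1) :
    t (k.succAbove i) - (if ((k.succAbove i : Fin (m + 1)) : ℕ) = 0 then 0 else
        t ⟨(k.succAbove i).1 - 1,
          Nat.lt_of_le_of_lt (Nat.sub_le _ 1) (k.succAbove i).isLt⟩)
      = (t ∘ k.succAbove) i - (if (i : ℕ) = 0 then 0 else
          (t ∘ k.succAbove) ⟨i.1 - 1, Nat.lt_of_le_of_lt (Nat.sub_le _ 1) i.isLt⟩) := by
  simp only [Function.comp_apply]
  congr 1
  by_cases h0 : i.1 = 0
  · have h1 : ((k.succAbove i : Fin (m + 1)) : ℕ) = 0 := by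
      rw [val_succAbove']
      have hlt : i.1 < k.1 := by omega
      rw [if_pos hlt]; exact h0
    simp [h0, h1]
  · have h1 : ((k.succAbove i : Fin (m + 1)) : ℕ) ≠ 0 := by
      rw [val_succAbove']; split <;> omega
    rw [if_neg h1, if_neg h0]
    refine congrArg t (Fin.ext ?_)
    simp only [val_succAbove']
    split_ifs <;> omega

lemma extremalFdd_update_eq_of_lt (F : ℝ → ℝ) (hF0 : ∀ z, 0 ≤ F z)
    (m : ℕ) (t x : Fin (m + 1) → ℝ) (ht0 : ∀ i, 0 ≤ t i) (htmono : Monotone t)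
    (k : Fin (m + 1)) (hk : (k : ℕ) < m) (y : ℝ) (hy : ∀ j, x j ≤ y) :
    extremalFdd F (m + 1) t (Function.update x k y)
      = extremalFdd F m (t ∘ k.succAbove) (x ∘ k.succAbove) := by
  set k' : Fin m := ⟨k.1, hk⟩ with hk'
  have split : ∀ (g : Fin m → ℝ), ∏ i, g i = g k' * ∏ i ∈ Finset.univ.erase k', g i :=
    fun g => (Finset.mul_prod_erase _ g (Finset.mem_univ k')).symm
  unfold extremalFdd
  rw [Fin.prod_univ_succAbove _ k, split, split, ← mul_assoc]
  have hsk : ((k.succAbove k' : Fin (m + 1)) : ℕ) = k.1 + 1 := by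
    rw [val_succAbove']; simp [hk']
  congr 1
  · -- merged factor
    have hM' := inf'_update_succAbove x k y hy k'
    have hsets : (Finset.Ici k).erase k = (Finset.Ici (k.succAbove k')).erase k := by
      ext j
      simp only [Finset.mem_erase, Finset.mem_Ici, ne_eq, Fin.le_def, Fin.ext_iff, hsk]
      omega
    have herase : ((Finset.Ici k).erase k).Nonempty := by
      refine ⟨k.succAbove k', Finset.mem_erase.mpr ⟨Fin.succAbove_ne _ _, ?_⟩⟩
      rw [Finset.mem_Ici, Fin.le_def, hsk]
      omega
    have hM : (Finset.Ici k).inf' ⟨k, Finset.mem_Ici.mpr le_rfl⟩ (Function.update x k y)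
        = (Finset.Ici k').inf' ⟨k', Finset.mem_Ici.mpr le_rfl⟩ (x ∘ k.succAbove) := by
      calc (Finset.Ici k).inf' ⟨k, Finset.mem_Ici.mpr le_rfl⟩ (Function.update x k y)
          = ((Finset.Ici k).erase k).inf' herase x :=
            inf'_update_of_forall_le x k y hy _ herase
        _ = ((Finset.Ici (k.succAbove k')).erase k).inf' (hsets ▸ herase) x :=
            inf'_set_congr hsets herase x
        _ = ((Finset.Ici k').image k.succAbove).inf'
              ((image_succAbove_Ici k k').symm ▸ hsets ▸ herase) x :=
            inf'_set_congr (image_succAbove_Ici k k').symm _ x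
        _ = (Finset.Ici k').inf' ⟨k', Finset.mem_Ici.mpr le_rfl⟩ (x ∘ k.succAbove) :=
            Finset.inf'_image _ _
    rw [hM, hM']
    set N := (Finset.Ici k').inf' ⟨k', Finset.mem_Ici.mpr le_rfl⟩ (x ∘ k.succAbove)
    have hP : (if (k : ℕ) = 0 then (0:ℝ) else
        t ⟨k.1 - 1, Nat.lt_of_le_of_lt (Nat.sub_le _ 1) k.isLt⟩) ≤ t k := by
      split_ifs with h
      · exact ht0 k
      · exact htmono (by rw [Fin.le_def]; exact Nat.sub_le _ _)
    have hQ : (if ((k.succAbove k' : Fin (m + 1)) : ℕ) = 0 then (0:ℝ) else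
        t ⟨(k.succAbove k').1 - 1,
          Nat.lt_of_le_of_lt (Nat.sub_le _ 1) (k.succAbove k').isLt⟩) = t k := by
      rw [if_neg (by omega)]
      exact congrArg t (Fin.ext (by simp [hsk]))
    have he1 : 0 ≤ t k - (if (k : ℕ) = 0 then (0:ℝ) else
        t ⟨k.1 - 1, Nat.lt_of_le_of_lt (Nat.sub_le _ 1) k.isLt⟩) := by linarith
    have he2 : 0 ≤ t (k.succAbove k') - (if ((k.succAbove k' : Fin (m + 1)) : ℕ) = 0 then (0:ℝ) else
        t ⟨(k.succAbove k').1 - 1,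
          Nat.lt_of_le_of_lt (Nat.sub_le _ 1) (k.succAbove k').isLt⟩) := by
      rw [hQ, sub_nonneg]
      exact htmono (by rw [Fin.le_def, hsk]; exact Nat.le_succ _)
    rw [← Real.rpow_add_of_nonneg (hF0 N) he1 he2]
    congr 1
    have hPR : (if (k : ℕ) = 0 then (0:ℝ) else
        t ⟨k.1 - 1, Nat.lt_of_le_of_lt (Nat.sub_le _ 1) k.isLt⟩)
        = (if (k' : ℕ) = 0 then (0:ℝ) else
          (t ∘ k.succAbove) ⟨k'.1 - 1, Nat.lt_of_le_of_lt (Nat.sub_le _ 1) k'.isLt⟩) := by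
      by_cases h0 : (k : ℕ) = 0
      · simp [h0, hk']
      · rw [if_neg h0, if_neg (by simp [hk', h0])]
        simp only [Function.comp_apply]
        refine congrArg t (Fin.ext ?_)
        simp only [val_succAbove']
        have : (k' : ℕ) = k.1 := rfl
        split_ifs <;> omega
    rw [hQ, hPR]
    simp only [Function.comp_apply]
    ring
  · apply Finset.prod_congr rfl
    intro i hi
    have hik : i ≠ k' := (Finset.mem_erase.mp hi).1
    rw [inf'_update_succAbove x k y hy i, exponent_eq t k i (fun h => hik (Fin.ext h))]

lemma extremalFdd_update_last (F : ℝ → ℝ) (m : ℕ) (t x : Fin (m + 1) → ℝ)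
    (y : ℝ) (hy : ∀ j, x j ≤ y) :
    extremalFdd F (m + 1) t (Function.update x (Fin.last m) y)
      = extremalFdd F m (t ∘ (Fin.last m).succAbove) (x ∘ (Fin.last m).succAbove)
        * F y ^ (t (Fin.last m) -
            if ((Fin.last m : Fin (m + 1)) : ℕ) = 0 then 0 else
              t ⟨(Fin.last m).1 - 1,
                Nat.lt_of_le_of_lt (Nat.sub_le _ 1) (Fin.last m).isLt⟩) := by
  unfold extremalFdd
  rw [Fin.prod_univ_succAbove _ (Fin.last m), mul_comm]
  congr 1
  · apply Finset.prod_congr rfl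
    intro i _
    rw [inf'_update_succAbove x _ y hy i, exponent_eq t (Fin.last m) i (by
      simp only [Fin.val_last]; omega)]
  · have hIci : (Finset.Ici (Fin.last m)) = {Fin.last m} := by
      ext j
      simp only [Finset.mem_Ici, Finset.mem_singleton]
      constructor
      · intro h
        exact le_antisymm (Fin.le_last j) h
      · intro h
        exact h ▸ le_rfl
    rw [inf'_set_congr hIci ⟨Fin.last m, Finset.mem_Ici.mpr le_rfl⟩ (Function.update x (Fin.last m) y),
      Finset.inf'_singleton, Function.update_self]

/-- Consistency of the family of finite-dimensional distributions: letting any one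
coordinate tend to `+∞` yields the corresponding lower-dimensional distribution. -/
theorem extremalFdd_consistent (F : ℝ → ℝ) (hmono : Monotone F)
    (h01 : ∀ y, 0 ≤ F y ∧ F y ≤ 1)
    (htop : Tendsto F atTop (nhds 1)) (hbot : Tendsto F atBot (nhds 0))
    (hrc : ∀ y, ContinuousWithinAt F (Set.Ici y) y)
    (m : ℕ) (t x : Fin (m + 1) → ℝ) (ht0 : ∀ i, 0 ≤ t i) (htmono : Monotone t)
    (k : Fin (m + 1)) :
    Tendsto (fun y => extremalFdd F (m + 1) t (Function.update x k y)) atTop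
      (nhds (extremalFdd F m (t ∘ k.succAbove) (x ∘ k.succAbove))) := by
  have hF0 : ∀ z, 0 ≤ F z := fun z => (h01 z).1
  have hXev : ∀ᶠ y in atTop, ∀ j, x j ≤ y := by
    filter_upwards [eventually_ge_atTop (Finset.univ.sup' ⟨k, Finset.mem_univ k⟩ x)] with y hy j
    exact le_trans (Finset.le_sup' x (Finset.mem_univ j)) hy
  rcases lt_or_ge (k : ℕ) m with hk | hk
  · apply Tendsto.congr' _ tendsto_const_nhds
    filter_upwards [hXev] with y hy
    exact (extremalFdd_update_eq_of_lt F hF0 m t x ht0 htmono k hk y hy).symm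
  · have hkl : k = Fin.last m := Fin.ext (le_antisymm (Nat.lt_succ_iff.mp k.isLt) hk)
    subst hkl
    have h2 := htop.rpow_const (p := (t (Fin.last m) -
        if ((Fin.last m : Fin (m + 1)) : ℕ) = 0 then 0 else
          t ⟨(Fin.last m).1 - 1, Nat.lt_of_le_of_lt (Nat.sub_le _ 1) (Fin.last m).isLt⟩))
      (Or.inl one_ne_zero)
    rw [Real.one_rpow] at h2
    have h1 := (tendsto_const_nhds (α := ℝ) (f := atTop)
      (x := extremalFdd F m (t ∘ (Fin.last m).succAbove) (x ∘ (Fin.last m).succAbove))).mul h2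
    rw [mul_one] at h1
    apply h1.congr'
    filter_upwards [hXev] with y hy
    exact (extremalFdd_update_last F m t x y hy).symm
end

section
/- Let (σ_i)_{i≥1} be i.i.d. random variables with P(σ_1 ≥ u) = ρ_u^M / ρ_ε^M for ε ≤ u ≤ M, where ρ_a^b = 1/a - 1/b. Let R = { max_{i=1..j} σ_i : j ≥ 1 } be the set of record values. Then for ε < a < b < M, P(R ∩ [a,b] = ∅) = ρ_b^M / ρ_a^M = (1/b - 1/M)/(1/a - 1/M). -/
open Filter MeasureTheory Set Topology
open scoped ProbabilityTheory

/-- For i.i.d. `σ_i` with survival function `P(σ_1 ≥ u) = ρ_u^M / ρ_ε^M` on `[ε, M]`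
(where `ρ_a^b = 1/a - 1/b`), the set of running-maximum record values avoids an
interval `[a,b] ⊆ (ε, M)` with probability `ρ_b^M / ρ_a^M`. -/
theorem record_avoidance_prob {Ω : Type*} [MeasureSpace Ω]
    [IsProbabilityMeasure (ℙ : Measure Ω)]
    (ε M a b : ℝ) (hε : 0 < ε) (hεa : ε < a) (hab : a < b) (hbM : b < M)
    (σ : ℕ → Ω → ℝ) (hmeas : ∀ i, Measurable (σ i))
    (hindep : ProbabilityTheory.iIndepFun σ ℙ)
    (hident : ∀ i, ProbabilityTheory.IdentDistrib (σ i) (σ 0) ℙ ℙ)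
    (hrange : ∀ i ω, σ i ω ∈ Set.Icc ε M)
    (hsurv : ∀ u, ε ≤ u → u ≤ M →
      ℙ {ω | u ≤ σ 0 ω} = ENNReal.ofReal ((1 / u - 1 / M) / (1 / ε - 1 / M))) :
    ℙ {ω | ∀ j : ℕ,
        ((Finset.range (j + 1)).sup' Finset.nonempty_range_add_one fun i => σ i ω)
          ∉ Set.Icc a b}
      = ENNReal.ofReal ((1 / b - 1 / M) / (1 / a - 1 / M)) := by
  have ha : 0 < a := hε.trans hεa
  have hb : 0 < b := ha.trans hab
  have hM : 0 < M := hb.trans hbM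
  have hεM : ε < M := hεa.trans (hab.trans hbM)
  have hd : 0 < 1 / ε - 1 / M := by
    have := one_div_lt_one_div_of_lt hε hεM; linarith
  set ra : ℝ := (1 / a - 1 / M) / (1 / ε - 1 / M) with hra_def
  set rb : ℝ := (1 / b - 1 / M) / (1 / ε - 1 / M) with hrb_def
  have hra_pos : 0 < ra := by
    have := one_div_lt_one_div_of_lt ha (hab.trans hbM)
    exact div_pos (by linarith) hd
  have hrb_pos : 0 < rb := by
    have := one_div_lt_one_div_of_lt hb hbM
    exact div_pos (by linarith) hd
  have hra_le1 : ra ≤ 1 := by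
    rw [div_le_one hd]
    have := one_div_le_one_div_of_le hε hεa.le
    linarith
  -- survival at general levels, reals
  -- probability that σ i < a
  set Q : ENNReal := 1 - ENNReal.ofReal ra with hQ_def
  have hIci : ∀ u, ε ≤ u → u ≤ M → {ω | u ≤ σ 0 ω} = σ 0 ⁻¹' Ici u := by
    intro u _ _; rfl
  have hA0 : ∀ i, ℙ (σ i ⁻¹' Iio a) = Q := by
    intro i
    rw [(hident i).measure_mem_eq measurableSet_Iio]
    have hcompl : σ 0 ⁻¹' Iio a = (σ 0 ⁻¹' Ici a)ᶜ := by
      ext ω; simp [not_le]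
    rw [hcompl, prob_compl_eq_one_sub ((hmeas 0) measurableSet_Ici)]
    have := hsurv a hεa.le (hab.trans hbM).le
    rw [hIci a hεa.le (hab.trans hbM).le] at this
    rw [this]
  -- probability that σ i > b, via continuity from below
  have hB0 : ∀ i, ℙ (σ i ⁻¹' Ioi b) = ENNReal.ofReal rb := by
    intro i
    rw [(hident i).measure_mem_eq measurableSet_Ioi]
    set c : ℕ → ℝ := fun n => b + (M - b) / (n + 1) with hc_def
    have hcmem : ∀ n, ε ≤ c n ∧ c n ≤ M := by
      intro n
      have hn1 : (0:ℝ) < n + 1 := Nat.cast_add_one_pos n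
      constructor
      · have : 0 ≤ (M - b) / (n + 1) := div_nonneg (by linarith) hn1.le
        simp only [hc_def]; nlinarith [hεa.trans hab]
      · have : (M - b) / (n + 1) ≤ M - b := by
          apply div_le_self (by linarith) (by linarith)
        simp only [hc_def]; linarith
    have hmono : Monotone fun n => σ 0 ⁻¹' Ici (c n) := by
      intro m n hmn
      apply preimage_mono
      apply Ici_subset_Ici.mpr
      simp only [hc_def]
      have h1 : (0:ℝ) < m + 1 := Nat.cast_add_one_pos m
      have h2 : (m:ℝ) + 1 ≤ n + 1 := by exact_mod_cast by omega
      have := div_le_div_of_nonneg_left (by linarith : (0:ℝ) ≤ M - b) h1 h2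
      linarith
    have hunion : (⋃ n, σ 0 ⁻¹' Ici (c n)) = σ 0 ⁻¹' Ioi b := by
      ext ω
      simp only [mem_iUnion, mem_preimage, mem_Ici, mem_Ioi]
      constructor
      · rintro ⟨n, hn⟩
        have hn1 : (0:ℝ) < n + 1 := Nat.cast_add_one_pos n
        have : 0 < (M - b) / (n + 1) := div_pos (by linarith) hn1
        simp only [hc_def] at hn; linarith
      · intro hx
        obtain ⟨n, hn⟩ := exists_nat_gt ((M - b) / (σ 0 ω - b))
        refine ⟨n, ?_⟩
        have hxb : 0 < σ 0 ω - b := by linarith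
        have hn1 : (0:ℝ) < n + 1 := Nat.cast_add_one_pos n
        have : (M - b) / (σ 0 ω - b) < n + 1 := by
          calc (M - b) / (σ 0 ω - b) < n := hn
          _ < n + 1 := by linarith
        have := (div_lt_iff₀ hxb).mp this
        have : (M - b) / (n + 1) ≤ σ 0 ω - b := by
          rw [div_le_iff₀ hn1]; nlinarith
        simp only [hc_def]; linarith
    have h1 : Tendsto (fun n => ℙ (σ 0 ⁻¹' Ici (c n))) atTop (𝓝 (ℙ (σ 0 ⁻¹' Ioi b))) := by
      have := tendsto_measure_iUnion_atTop (μ := ℙ) hmono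
      rwa [hunion] at this
    have h2 : Tendsto (fun n => ℙ (σ 0 ⁻¹' Ici (c n))) atTop (𝓝 (ENNReal.ofReal rb)) := by
      have hval : ∀ n, ℙ (σ 0 ⁻¹' Ici (c n))
          = ENNReal.ofReal ((1 / c n - 1 / M) / (1 / ε - 1 / M)) := by
        intro n
        rw [← hIci (c n) (hcmem n).1 (hcmem n).2]
        exact hsurv (c n) (hcmem n).1 (hcmem n).2
      simp only [hval]
      apply ENNReal.tendsto_ofReal
      rw [hrb_def]
      apply Tendsto.div_const
      apply Tendsto.sub_const
      have hc_tendsto : Tendsto c atTop (𝓝 b) := by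
        have : Tendsto (fun n : ℕ => (M - b) / (n + 1)) atTop (𝓝 0) := by
          have := tendsto_one_div_add_atTop_nhds_zero_nat.const_mul (M - b)
          simpa [div_eq_mul_inv, mul_comm] using this
        have := this.const_add b
        simpa [hc_def] using this
      have hb_ne : b ≠ 0 := hb.ne'
      simp only [one_div]
      exact (hc_tendsto.inv₀ hb_ne)
    exact tendsto_nhds_unique h1 h2
  -- the event decomposition
  set A : ℕ → Set Ω := fun i => σ i ⁻¹' Iio a with hA_def
  set B : ℕ → Set Ω := fun j => σ j ⁻¹' Ioi b ∩ ⋂ i ∈ Finset.range j, A i with hB_def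
  have hEeq : {ω : Ω | ∀ j : ℕ,
        ((Finset.range (j + 1)).sup' Finset.nonempty_range_add_one fun i => σ i ω)
          ∉ Set.Icc a b} = (⋂ i, A i) ∪ ⋃ j, B j := by
    ext ω
    simp only [mem_setOf_eq, mem_union, mem_iInter, mem_iUnion, hA_def, hB_def,
      mem_inter_iff, mem_preimage, mem_Iio, mem_Ioi]
    constructor
    · intro hω
      by_cases hall : ∀ i, σ i ω < a
      · exact Or.inl hall
      · right
        push_neg at hall
        have hex : ∃ i, a ≤ σ i ω := hall
        set j := Nat.find hex with hj_def
        have hj : a ≤ σ j ω := Nat.find_spec hex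
        have hmin : ∀ i, i < j → σ i ω < a := fun i hi =>
          not_le.mp (Nat.find_min hex hi)
        refine ⟨j, ?_, ?_⟩
        · by_contra hle
          push_neg at hle
          apply hω j
          constructor
          · exact le_trans hj (Finset.le_sup' (f := fun i => σ i ω) (Finset.self_mem_range_succ j))
          · apply Finset.sup'_le
            intro i hi
            rw [Finset.mem_range, Nat.lt_succ_iff] at hi
            rcases hi.lt_or_eq with h | h
            · exact (hmin i h).le.trans hab.le
            · rw [h]; exact hle
        · intro i hi
          rw [Finset.mem_range] at hi
          exact hmin i hi
    · rintro (hall | ⟨j, hbj, hia⟩) k hk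
      · have : ((Finset.range (k + 1)).sup' Finset.nonempty_range_add_one fun i => σ i ω) < a :=
          (Finset.sup'_lt_iff Finset.nonempty_range_add_one).mpr fun i _ => hall i
        exact absurd hk.1 (by linarith)
      · rcases lt_or_ge k j with h | h
        · have : ((Finset.range (k + 1)).sup' Finset.nonempty_range_add_one fun i => σ i ω) < a := by
            apply (Finset.sup'_lt_iff Finset.nonempty_range_add_one).mpr
            intro i hi
            rw [Finset.mem_range, Nat.lt_succ_iff] at hi
            exact hia i (by simpa [Finset.mem_range] using lt_of_le_of_lt hi h)
          exact absurd hk.1 (by linarith)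
        · have : b < ((Finset.range (k + 1)).sup' Finset.nonempty_range_add_one fun i => σ i ω) :=
            lt_of_lt_of_le hbj (Finset.le_sup' (f := fun i => σ i ω) (by simp [Finset.mem_range]; omega))
          exact absurd hk.2 (by linarith)
  -- measurability
  have hAm : ∀ i, MeasurableSet (A i) := fun i => (hmeas i) measurableSet_Iio
  have hBm : ∀ j, MeasurableSet (B j) := fun j =>
    ((hmeas j) measurableSet_Ioi).inter
      (MeasurableSet.biInter (Finset.range j).countable_toSet fun i _ => hAm i)
  -- disjointness
  have hkey : ∀ j k : ℕ, j < k → Disjoint (B j) (B k) := by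
    intro j k hjk
    rw [Set.disjoint_left]
    rintro ω ⟨hj1, _⟩ ⟨_, hk2⟩
    have h1 : b < σ j ω := hj1
    have h2 : σ j ω < a := by
      have := mem_iInter₂.mp hk2 j (by simpa [Finset.mem_range] using hjk)
      exact this
    linarith
  have hdisj : Pairwise (Function.onFun Disjoint B) := by
    intro j k hne
    rcases lt_or_gt_of_ne hne with h | h
    · exact hkey j k h
    · exact (hkey k j h).symm
  -- ℙ(⋂ A i) = 0
  have hQlt : Q < 1 :=
    ENNReal.sub_lt_self ENNReal.one_ne_top one_ne_zero
      (ENNReal.ofReal_pos.mpr hra_pos).ne'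
  have hprod : ∀ n : ℕ, ℙ (⋂ i ∈ Finset.range n, A i) = Q ^ n := by
    intro n
    have := hindep.measure_inter_preimage_eq_mul (Finset.range n)
      (sets := fun _ => Iio a) (fun i _ => measurableSet_Iio)
    rw [hA_def]
    rw [this]
    rw [Finset.prod_congr rfl fun i _ => hA0 i, Finset.prod_const, Finset.card_range]
  have hAinf : ℙ (⋂ i, A i) = 0 := by
    have hle : ∀ n : ℕ, ℙ (⋂ i, A i) ≤ Q ^ n := by
      intro n
      calc ℙ (⋂ i, A i) ≤ ℙ (⋂ i ∈ Finset.range n, A i) :=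
            measure_mono (fun ω hω => mem_iInter₂.mpr fun i _ => mem_iInter.mp hω i)
        _ = Q ^ n := hprod n
    have htend := ENNReal.tendsto_pow_atTop_nhds_zero_of_lt_one hQlt
    have := ge_of_tendsto htend (Filter.Eventually.of_forall hle)
    exact le_antisymm this (by simp)
  -- ℙ(B j)
  have hBval : ∀ j, ℙ (B j) = ENNReal.ofReal rb * Q ^ j := by
    intro j
    have hBset : B j = ⋂ i ∈ Finset.range (j + 1),
        σ i ⁻¹' (if i = j then Ioi b else Iio a) := by
      show σ j ⁻¹' Ioi b ∩ (⋂ i ∈ Finset.range j, A i) = _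
      rw [Finset.range_add_one, Finset.set_biInter_insert, if_pos rfl]
      congr 1
      apply Set.iInter₂_congr
      intro i hi
      rw [if_neg (Finset.mem_range.mp hi).ne]
    rw [hBset]
    rw [hindep.measure_inter_preimage_eq_mul (Finset.range (j + 1))
      (sets := fun i => if i = j then Ioi b else Iio a)
      (fun i _ => by rcases eq_or_ne i j with h | h <;> simp [h])]
    rw [Finset.range_add_one, Finset.prod_insert Finset.notMem_range_self, if_pos rfl]
    rw [Finset.prod_congr rfl fun i hi => by
      rw [if_neg (Finset.mem_range.mp hi).ne, hA0 i]]
    rw [Finset.prod_const, Finset.card_range, hB0 j]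
  -- put it together
  have hUB : ℙ (⋃ j, B j) = ∑' j, ℙ (B j) := measure_iUnion hdisj hBm
  have hEP : ℙ {ω : Ω | ∀ j : ℕ,
        ((Finset.range (j + 1)).sup' Finset.nonempty_range_add_one fun i => σ i ω)
          ∉ Set.Icc a b} = ℙ (⋃ j, B j) := by
    rw [hEeq]
    apply le_antisymm
    · calc ℙ ((⋂ i, A i) ∪ ⋃ j, B j) ≤ ℙ (⋂ i, A i) + ℙ (⋃ j, B j) := measure_union_le _ _
        _ = ℙ (⋃ j, B j) := by rw [hAinf, zero_add]
    · exact measure_mono subset_union_right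
  rw [hEP, hUB]
  simp only [hBval]
  rw [ENNReal.tsum_mul_left, ENNReal.tsum_geometric]
  have h1mQ : 1 - Q = ENNReal.ofReal ra := by
    rw [hQ_def]
    exact ENNReal.sub_sub_cancel ENNReal.one_ne_top (ENNReal.ofReal_le_one.mpr hra_le1)
  rw [h1mQ, ← div_eq_mul_inv, ← ENNReal.ofReal_div_of_pos hra_pos]
  congr 1
  rw [hra_def, hrb_def, div_div_div_cancel_right₀]
  exact hd.ne'
end

section
/- Let Z be a standard Gaussian random variable, and let (α_n), (β_n) be positive sequences with α_n β_n √n → ∞. Set g_n = exp(α_n β_n² n) and b_n^{-1} = α_n β_n √(2πn) · exp(α_n² β_n² n / 2). Then for every fixed u > 0, b_n^{-1} · P(exp(β_n √n Z) ≥ u^{1/α_n} g_n) → 1/u as n → ∞. -/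
open Filter MeasureTheory
open scoped ProbabilityTheory
section RemAux
open Set Real
open scoped ProbabilityTheory

noncomputable def gaussTail (v : ℝ) : ℝ := ∫ x in Set.Ioi v, Real.exp (-x^2/2)

lemma integrable_tail (v : ℝ) : IntegrableOn (fun x => Real.exp (-x^2/2)) (Set.Ioi v) := by
  have h : Integrable (fun x : ℝ => Real.exp (-(1/2 : ℝ) * x^2)) :=
    integrable_exp_neg_mul_sq (by norm_num)
  have h2 : (fun x : ℝ => Real.exp (-(1/2:ℝ) * x^2)) = fun x => Real.exp (-x^2/2) := by
    ext x; ring_nf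
  rw [h2] at h
  exact h.integrableOn

lemma integrable_tail2 {v : ℝ} (hv : 0 < v) :
    IntegrableOn (fun x => (1 + (x⁻¹)^2) * Real.exp (-x^2/2)) (Set.Ioi v) := by
  refine Integrable.mono ((integrable_tail v).const_mul (1 + (v⁻¹)^2)) ?_ ?_
  · refine (Measurable.aestronglyMeasurable ?_).restrict
    exact ((measurable_const.add ((measurable_inv).pow_const 2)).mul
      (((measurable_id.pow_const 2).neg.div_const 2).exp))
  · filter_upwards [MeasureTheory.ae_restrict_mem measurableSet_Ioi] with x hx
    have hx0 : 0 < x := lt_trans hv hx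
    have hle : (x⁻¹)^2 ≤ (v⁻¹)^2 := by
      apply pow_le_pow_left₀ (by positivity)
      exact inv_anti₀ hv (le_of_lt hx)
    rw [Real.norm_eq_abs, Real.norm_eq_abs, abs_of_nonneg (by positivity),
      abs_of_nonneg (by positivity)]
    apply mul_le_mul_of_nonneg_right (by linarith) (Real.exp_nonneg _)

lemma gaussTail_identity {v : ℝ} (hv : 0 < v) :
    ∫ x in Set.Ioi v, (1 + (x⁻¹)^2) * Real.exp (-x^2/2) = Real.exp (-v^2/2) / v := by
  have hderiv : ∀ x ∈ Set.Ioi v, HasDerivAt (fun x : ℝ => -(x⁻¹ * Real.exp (-x^2/2)))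
      ((1 + (x⁻¹)^2) * Real.exp (-x^2/2)) x := by
    intro x hx
    have hx0 : x ≠ 0 := ne_of_gt (lt_trans hv hx)
    have h1 : HasDerivAt (fun x : ℝ => x⁻¹) (-(x^2)⁻¹) x := hasDerivAt_inv hx0
    have h2 : HasDerivAt (fun x : ℝ => Real.exp (-x^2/2)) (-x * Real.exp (-x^2/2)) x := by
      have : HasDerivAt (fun x : ℝ => -x^2/2) (-x) x := by
        have := ((hasDerivAt_pow 2 x).neg).div_const 2
        refine this.congr_deriv ?_
        norm_num
        ring
      simpa [mul_comm] using this.exp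
    have := (h1.mul h2).neg
    refine this.congr_deriv ?_
    field_simp
    ring
  have htend : Tendsto (fun x : ℝ => -(x⁻¹ * Real.exp (-x^2/2))) atTop (nhds 0) := by
    have h1 : Tendsto (fun x : ℝ => x⁻¹) atTop (nhds 0) := tendsto_inv_atTop_zero
    have h2 : Tendsto (fun x : ℝ => Real.exp (-x^2/2)) atTop (nhds 0) := by
      apply Real.tendsto_exp_atBot.comp
      have : Tendsto (fun x : ℝ => x^2/2) atTop atTop :=
        (tendsto_pow_atTop (two_ne_zero)).atTop_div_const (by norm_num)
      have := tendsto_neg_atBot_iff.mpr this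
      simpa [neg_div] using this
    simpa using h1.mul h2 |>.neg
  have := integral_Ioi_of_hasDerivAt_of_tendsto
    (f := fun x : ℝ => -(x⁻¹ * Real.exp (-x^2/2)))
    (f' := fun x => (1 + (x⁻¹)^2) * Real.exp (-x^2/2)) ?_ hderiv (integrable_tail2 hv) htend
  · rw [this]; field_simp; ring
  · apply ContinuousWithinAt.neg
    apply ContinuousWithinAt.mul
    · exact (continuousAt_inv₀ (ne_of_gt hv)).continuousWithinAt
    · exact (Real.continuous_exp.comp ((continuous_pow 2).neg.div_const 2)).continuousWithinAt

lemma gaussTail_upper {v : ℝ} (hv : 0 < v) : gaussTail v ≤ Real.exp (-v^2/2) / v := by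
  rw [← gaussTail_identity hv, gaussTail]
  apply setIntegral_mono_on (integrable_tail v) (integrable_tail2 hv) measurableSet_Ioi
  intro x _
  nlinarith [Real.exp_nonneg (-x^2/2), sq_nonneg (x⁻¹)]

lemma gaussTail_lower {v : ℝ} (hv : 0 < v) :
    Real.exp (-v^2/2) / v ≤ (1 + (v⁻¹)^2) * gaussTail v := by
  rw [← gaussTail_identity hv, gaussTail, ← integral_const_mul]
  apply setIntegral_mono_on (integrable_tail2 hv) ((integrable_tail v).const_mul _)
    measurableSet_Ioi
  intro x hx
  have hx0 : 0 < x := lt_trans hv hx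
  have hle : (x⁻¹)^2 ≤ (v⁻¹)^2 := by
    apply pow_le_pow_left₀ (by positivity)
    exact inv_anti₀ hv (le_of_lt hx)
  apply mul_le_mul_of_nonneg_right (by linarith) (Real.exp_nonneg _)

lemma tendsto_div_add (c : ℝ) : Tendsto (fun s : ℝ => s / (s + c)) atTop (nhds 1) := by
  have h : Tendsto (fun s : ℝ => 1 - c / (s + c)) atTop (nhds 1) := by
    have := (tendsto_const_nhds (x := c)).div_atTop
      (tendsto_atTop_add_const_right atTop c tendsto_id)
    simpa using (tendsto_const_nhds (x := (1:ℝ))).sub this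
  apply h.congr'
  filter_upwards [eventually_gt_atTop (max 0 (-c + 1))] with s hs
  have : s + c ≠ 0 := by
    have := lt_of_le_of_lt (le_max_right 0 (-c+1)) hs; intro h0; nlinarith
  field_simp; ring

lemma gaussTail_lower' {v : ℝ} (hv : 0 < v) :
    v / (v^2+1) * Real.exp (-v^2/2) ≤ gaussTail v := by
  have h := gaussTail_lower hv
  have h13 : (1:ℝ) + (v⁻¹)^2 = (v^2+1)/v^2 := by field_simp
  rw [h13] at h
  calc v / (v^2+1) * Real.exp (-v^2/2)
      = (v^2/(v^2+1)) * (Real.exp (-v^2/2) / v) := by field_simp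
    _ ≤ (v^2/(v^2+1)) * ((v^2+1)/v^2 * gaussTail v) := by
        apply mul_le_mul_of_nonneg_left h (by positivity)
    _ = gaussTail v := by field_simp

lemma gaussTail_tendsto :
    Tendsto (fun v : ℝ => v * Real.exp (v^2/2) * gaussTail v) atTop (nhds 1) := by
  have hlow : Tendsto (fun v : ℝ => v^2 / (v^2 + 1)) atTop (nhds 1) := by
    exact (tendsto_div_add 1).comp
      ((tendsto_pow_atTop (two_ne_zero)) : Tendsto (fun v : ℝ => v^2) atTop atTop)
  apply tendsto_of_tendsto_of_tendsto_of_le_of_le' hlow tendsto_const_nhds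
  · filter_upwards [eventually_gt_atTop (0:ℝ)] with v hv
    have h := gaussTail_lower' hv
    have hEe : Real.exp (v^2/2) * Real.exp (-v^2/2) = 1 := by
      rw [← Real.exp_add]; ring_nf; exact Real.exp_zero
    calc v^2/(v^2+1) = v * Real.exp (v^2/2) * (v/(v^2+1) * Real.exp (-v^2/2)) := by
          rw [show v * Real.exp (v^2/2) * (v/(v^2+1) * Real.exp (-v^2/2))
              = v^2/(v^2+1) * (Real.exp (v^2/2) * Real.exp (-v^2/2)) by ring, hEe, mul_one]
      _ ≤ v * Real.exp (v^2/2) * gaussTail v := by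
          apply mul_le_mul_of_nonneg_left h (by positivity)
  · filter_upwards [eventually_gt_atTop (0:ℝ)] with v hv
    have h := gaussTail_upper hv
    have hEe : Real.exp (v^2/2) * Real.exp (-v^2/2) = 1 := by
      rw [← Real.exp_add]; ring_nf; exact Real.exp_zero
    calc v * Real.exp (v^2/2) * gaussTail v
        ≤ v * Real.exp (v^2/2) * (Real.exp (-v^2/2) / v) := by
          apply mul_le_mul_of_nonneg_left h (by positivity)
      _ = Real.exp (v^2/2) * Real.exp (-v^2/2) := by field_simp
      _ = 1 := hEe

/-- Gaussian deep-trap tail asymptotics (Condition A for the REM):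
with `g_n = exp(α_n β_n² n)` and `b_n⁻¹ = α_n β_n √(2πn) exp(α_n² β_n² n/2)`,
for every `u > 0`, `b_n⁻¹ P(exp(β_n √n Z) ≥ u^{1/α_n} g_n) → 1/u`. -/
theorem rem_condition_A_limit (α β : ℕ → ℝ) (hα : ∀ n, 0 < α n) (hβ : ∀ n, 0 < β n)
    (hdiv : Tendsto (fun n => α n * β n * Real.sqrt n) atTop atTop) :
    ∀ u : ℝ, 0 < u →
      Tendsto (fun n =>
          (α n * β n * Real.sqrt (2 * Real.pi * n) *
              Real.exp (α n ^ 2 * β n ^ 2 * n / 2)) *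
            ((ProbabilityTheory.gaussianReal 0 1)
                {z : ℝ | u ^ (1 / α n) * Real.exp (α n * β n ^ 2 * n) ≤
                  Real.exp (β n * Real.sqrt n * z)}).toReal)
        atTop (nhds (1 / u)) := by
  intro u hu
  set a : ℕ → ℝ := fun n => α n * β n * Real.sqrt n with ha_def
  set c : ℝ := Real.log u with hc_def
  set v : ℕ → ℝ := fun n => a n + c / a n with hv_def
  -- limits of the ingredients
  have ha2 : Tendsto (fun n => (a n)^2) atTop atTop := by
    have := hdiv.atTop_mul_atTop₀ hdiv
    simpa [pow_two] using this
  have t1 : Tendsto (fun n => (a n)^2 / ((a n)^2 + c)) atTop (nhds 1) :=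
    (tendsto_div_add c).comp ha2
  have t2 : Tendsto (fun n => Real.exp (-(c^2 / (2 * (a n)^2)))) atTop (nhds 1) := by
    have h2a : Tendsto (fun n => 2 * (a n)^2) atTop atTop := by
      simpa using ha2.const_mul_atTop (two_pos)
    have hz : Tendsto (fun n => -(c^2 / (2 * (a n)^2))) atTop (nhds 0) := by
      simpa using ((tendsto_const_nhds (x := c^2)).div_atTop h2a).neg
    have := (Real.continuous_exp.tendsto 0).comp hz
    rwa [Real.exp_zero] at this
  have tv : Tendsto v atTop atTop := by
    rw [hv_def]
    apply Filter.tendsto_atTop_add_right_of_le' atTop (-|c|) hdiv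
    filter_upwards [hdiv.eventually_ge_atTop 1] with n hn
    have ha : (0:ℝ) < a n := lt_of_lt_of_le one_pos hn
    have h1 : |c / a n| ≤ |c| := by
      rw [abs_div, abs_of_pos ha]
      exact div_le_self (abs_nonneg c) hn
    linarith [neg_abs_le (c / a n)]
  have t4 : Tendsto (fun n => v n * Real.exp ((v n)^2/2) * gaussTail (v n)) atTop (nhds 1) :=
    gaussTail_tendsto.comp tv
  have tH : Tendsto (fun n => (a n)^2 / ((a n)^2 + c) * Real.exp (-(c^2 / (2 * (a n)^2))) * u⁻¹ *
      (v n * Real.exp ((v n)^2/2) * gaussTail (v n))) atTop (nhds (1 * 1 * u⁻¹ * 1)) :=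
    ((t1.mul t2).mul tendsto_const_nhds).mul t4
  rw [show (1:ℝ) * 1 * u⁻¹ * 1 = 1/u by rw [one_div]; ring] at tH
  apply tH.congr'
  filter_upwards [eventually_ge_atTop 1, hdiv.eventually_ge_atTop (1 + |c|)] with n hn1 hna
  have hαn := hα n
  have hβn := hβ n
  have hs : (0:ℝ) < Real.sqrt n := Real.sqrt_pos.mpr (by exact_mod_cast Nat.pos_of_ne_zero (by omega))
  have hss : Real.sqrt n * Real.sqrt n = (n:ℝ) := Real.mul_self_sqrt (Nat.cast_nonneg n)
  have ha : (0:ℝ) < a n := by rw [ha_def]; positivity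
  have ha1 : (1:ℝ) ≤ a n := le_trans (by linarith [abs_nonneg c]) hna
  have hca : |c / a n| ≤ |c| := by
    rw [abs_div, abs_of_pos ha]; exact div_le_self (abs_nonneg c) ha1
  have hv : 0 < v n := by
    have := neg_abs_le (c / a n)
    have h2 := neg_abs_le c
    simp only [hv_def]
    linarith [hca]
  have hac : (0:ℝ) < (a n)^2 + c := by nlinarith [neg_abs_le c, abs_nonneg c]
  -- set equality
  have hbs : 0 < β n * Real.sqrt n := by positivity
  have hset : {z : ℝ | u ^ (1 / α n) * Real.exp (α n * β n ^ 2 * n) ≤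
      Real.exp (β n * Real.sqrt n * z)} = Set.Ici (v n) := by
    ext z
    simp only [Set.mem_setOf_eq, Set.mem_Ici]
    rw [Real.rpow_def_of_pos hu, ← Real.exp_add, Real.exp_le_exp]
    have hkey : Real.log u * (1 / α n) + α n * β n ^ 2 * n = v n * (β n * Real.sqrt n) := by
      simp only [hv_def, ha_def, ← hc_def]
      field_simp
      linear_combination (-(α n ^ 2 * β n ^ 2)) * hss
    rw [hkey, show β n * Real.sqrt n * z = z * (β n * Real.sqrt n) from mul_comm _ _]
    exact mul_le_mul_iff_of_pos_right hbs
  -- measure value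
  have hmeas : ((ProbabilityTheory.gaussianReal 0 1) (Set.Ici (v n))).toReal
      = (Real.sqrt (2 * Real.pi))⁻¹ * gaussTail (v n) := by
    rw [ProbabilityTheory.gaussianReal_apply_eq_integral 0 one_ne_zero,
      ENNReal.toReal_ofReal (setIntegral_nonneg measurableSet_Ici
        (fun x _ => ProbabilityTheory.gaussianPDFReal_nonneg 0 1 x))]
    have hpdf : ∀ x : ℝ, ProbabilityTheory.gaussianPDFReal 0 1 x
        = (Real.sqrt (2 * Real.pi))⁻¹ * Real.exp (-x^2/2) := by
      intro x
      simp [ProbabilityTheory.gaussianPDFReal]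
    simp_rw [hpdf]
    rw [MeasureTheory.integral_Ici_eq_integral_Ioi, MeasureTheory.integral_const_mul]
    rfl
  rw [hset, hmeas]
  -- final algebra
  have hsq2pi : (0:ℝ) < Real.sqrt (2 * Real.pi) := Real.sqrt_pos.mpr (by positivity)
  have h2pi : Real.sqrt (2 * Real.pi * n) = Real.sqrt (2 * Real.pi) * Real.sqrt n :=
    Real.sqrt_mul (by positivity) _
  have haa : α n ^ 2 * β n ^ 2 * n / 2 = (a n)^2 / 2 := by
    simp only [ha_def]
    rw [mul_pow, mul_pow, Real.sq_sqrt (Nat.cast_nonneg n)]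
  have hu_exp : Real.exp c = u := Real.exp_log hu
  have huinv : u⁻¹ = Real.exp (-c) := by rw [Real.exp_neg, hu_exp]
  rw [h2pi, haa, huinv]
  rw [show α n * β n * (Real.sqrt (2 * Real.pi) * Real.sqrt n) * Real.exp ((a n)^2/2) *
      ((Real.sqrt (2 * Real.pi))⁻¹ * gaussTail (v n))
      = (Real.sqrt (2 * Real.pi) * (Real.sqrt (2 * Real.pi))⁻¹) *
        (a n * Real.exp ((a n)^2/2) * gaussTail (v n)) by simp only [ha_def]; ring,
    mul_inv_cancel₀ (ne_of_gt hsq2pi), one_mul]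
  rw [show (a n)^2 / ((a n)^2 + c) * Real.exp (-(c^2 / (2 * (a n)^2))) * Real.exp (-c) *
      (v n * Real.exp ((v n)^2/2) * gaussTail (v n))
      = ((a n)^2 / ((a n)^2 + c) * v n) *
        Real.exp (-(c^2 / (2 * (a n)^2)) + -c + (v n)^2/2) * gaussTail (v n) by
      rw [Real.exp_add, Real.exp_add]; ring]
  have hfrac : (a n)^2 / ((a n)^2 + c) * v n = a n := by
    simp only [hv_def]
    field_simp
  have hexp : -(c^2 / (2 * (a n)^2)) + -c + (v n)^2/2 = (a n)^2/2 := by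
    simp only [hv_def]
    field_simp
    ring
  rw [hfrac, hexp]

end RemAux
end

section
/- Let Z be a standard Gaussian. With the notation of the previous statement (g_n = exp(α_n β_n² n), b_n^{-1} = α_n β_n √(2πn) exp(α_n²β_n²n/2)), there exists a constant C > 0 such that for all n, all u > 0 and all d > 0, P(exp(β_n √n Z) ≥ u^{1/α_n} d g_n) ≤ C b_n / (u d^{α_n}). -/
open Filter MeasureTheory Set Real
open Filter MeasureTheory Set Real

lemma deriv_aux (x : ℝ) : HasDerivAt (fun y : ℝ => -Real.exp (-y^2/2)) (x * Real.exp (-x^2/2)) x := by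
  have h1 : HasDerivAt (fun y : ℝ => -y^2/2) (-x) x := by
    have := ((hasDerivAt_pow 2 x).neg).div_const 2
    simpa using this.congr_deriv (by ring)
  have h2 := h1.exp
  have := h2.neg
  exact this.congr_deriv (by ring)

lemma tendsto_aux : Tendsto (fun y : ℝ => -Real.exp (-y^2/2)) atTop (nhds 0) := by
  rw [show (0:ℝ) = -0 by ring]
  apply Tendsto.neg
  apply Real.tendsto_exp_atBot.comp
  apply Filter.Tendsto.atBot_div_const (by norm_num : (0:ℝ) < 2)
  exact tendsto_neg_atTop_atBot.comp (tendsto_pow_atTop two_ne_zero)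

lemma gauss_tail_integrable (v : ℝ) (hv : 0 < v) :
    IntegrableOn (fun x : ℝ => x * Real.exp (-x^2/2)) (Set.Ioi v) := by
  exact integrableOn_Ioi_deriv_of_nonneg' (fun x _ => deriv_aux x)
    (fun x hx => mul_nonneg (le_of_lt (hv.trans hx)) (Real.exp_pos _).le) tendsto_aux

lemma gauss_tail_integral (v : ℝ) (hv : 0 < v) :
    ∫ x in Set.Ioi v, x * Real.exp (-x^2/2) = Real.exp (-v^2/2) := by
  have := integral_Ioi_of_hasDerivAt_of_tendsto' (fun x _ => deriv_aux x)
    (gauss_tail_integrable v hv) tendsto_aux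
  simpa using this

lemma gauss_pdf_eq (z : ℝ) : ProbabilityTheory.gaussianPDFReal 0 1 z
    = (Real.sqrt (2*Real.pi))⁻¹ * Real.exp (-z^2/2) := by
  simp [ProbabilityTheory.gaussianPDFReal]

lemma gauss_tail_bound (v : ℝ) (hv : 0 < v) :
    ∫ x in Set.Ici v, ProbabilityTheory.gaussianPDFReal 0 1 x
      ≤ Real.exp (-v^2/2) / (Real.sqrt (2*Real.pi) * v) := by
  rw [MeasureTheory.integral_Ici_eq_integral_Ioi]
  have hc : (0:ℝ) < Real.sqrt (2*Real.pi) := Real.sqrt_pos.2 (by positivity)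
  calc ∫ x in Set.Ioi v, ProbabilityTheory.gaussianPDFReal 0 1 x
      ≤ ∫ x in Set.Ioi v, (Real.sqrt (2*Real.pi))⁻¹ / v * (x * Real.exp (-x^2/2)) := by
        apply setIntegral_mono_on
        · exact (ProbabilityTheory.integrable_gaussianPDFReal 0 1).integrableOn
        · exact (gauss_tail_integrable v hv).const_mul _
        · exact measurableSet_Ioi
        · intro x hx
          rw [gauss_pdf_eq]
          rw [Set.mem_Ioi] at hx
          have he := Real.exp_pos (-x^2/2)
          rw [div_mul_eq_mul_div, le_div_iff₀ hv]
          have h1 : (Real.sqrt (2*Real.pi))⁻¹ * Real.exp (-x^2/2) * v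
              ≤ (Real.sqrt (2*Real.pi))⁻¹ * Real.exp (-x^2/2) * x :=
            mul_le_mul_of_nonneg_left hx.le (by positivity)
          calc (Real.sqrt (2*Real.pi))⁻¹ * Real.exp (-x^2/2) * v
              ≤ (Real.sqrt (2*Real.pi))⁻¹ * Real.exp (-x^2/2) * x := h1
            _ = (Real.sqrt (2*Real.pi))⁻¹ * (x * Real.exp (-x^2/2)) := by ring
    _ = (Real.sqrt (2*Real.pi))⁻¹ / v * Real.exp (-v^2/2) := by
        rw [MeasureTheory.integral_const_mul, gauss_tail_integral v hv]
    _ = Real.exp (-v^2/2) / (Real.sqrt (2*Real.pi) * v) := by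
        field_simp

lemma sqrt2pi_le : Real.sqrt (2*Real.pi) ≤ 2.6 := by
  rw [show (2.6:ℝ) = Real.sqrt (2.6^2) from (Real.sqrt_sq (by norm_num)).symm]
  apply Real.sqrt_le_sqrt
  nlinarith [Real.pi_lt_d2]

lemma key1 {x v : ℝ} (hx : 0 < x) (hv : v ≤ 1) :
    x * Real.sqrt (2*Real.pi) * Real.exp (x*v - x^2/2) ≤ 10 := by
  have h1 : Real.exp (x*v - x^2/2) ≤ Real.exp (x - x^2/2) :=
    Real.exp_le_exp.2 (by nlinarith)
  have h2 : x ≤ Real.exp (x^2/2 - x + 1) :=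
    le_trans (by nlinarith [sq_nonneg (x-2)]) (Real.add_one_le_exp _)
  have h3 : x * Real.exp (x - x^2/2) ≤ Real.exp 1 := by
    calc x * Real.exp (x - x^2/2)
        ≤ Real.exp (x^2/2 - x + 1) * Real.exp (x - x^2/2) :=
          mul_le_mul_of_nonneg_right h2 (Real.exp_pos _).le
      _ = Real.exp 1 := by rw [← Real.exp_add]; congr 1; ring
  have he : Real.exp 1 < 2.7182818286 := Real.exp_one_lt_d9
  have hs := sqrt2pi_le
  have hs0 := Real.sqrt_nonneg (2*Real.pi)
  have hep := Real.exp_pos (x - x^2/2)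
  have hep2 := Real.exp_pos (x*v - x^2/2)
  nlinarith [mul_le_mul_of_nonneg_left h1 hx.le, mul_le_mul_of_nonneg_right h3 hs0]

lemma key2 {x v : ℝ} (hx : 0 < x) (hv : 1 < v) :
    x * Real.exp (-(x-v)^2/2) ≤ 10 * v := by
  rcases le_or_gt x (2*v) with h | h
  · have h1 : Real.exp (-(x-v)^2/2) ≤ 1 := Real.exp_le_one_iff.2 (by nlinarith)
    nlinarith [Real.exp_pos (-(x-v)^2/2)]
  · have h3 : Real.exp (-(x-v)^2/2) ≤ Real.exp (-(x^2/8)) :=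
      Real.exp_le_exp.2 (by nlinarith)
    have h4 : x^2/8 ≤ Real.exp (x^2/8) :=
      le_trans (by nlinarith) (Real.add_one_le_exp _)
    have hprod : Real.exp (-(x^2/8)) * Real.exp (x^2/8) = 1 := by
      rw [← Real.exp_add]; norm_num
    have hp1 := Real.exp_pos (-(x^2/8))
    have hp2 := Real.exp_pos (x^2/8)
    -- exp(-(x²/8)) * x² ≤ 8
    have h5 : Real.exp (-(x^2/8)) * x^2 ≤ 8 := by
      nlinarith [mul_le_mul_of_nonneg_left h4 hp1.le]
    nlinarith [mul_le_mul_of_nonneg_left h3 hx.le]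


open Filter MeasureTheory
open scoped ProbabilityTheory

/-- Uniform Gaussian deep-trap tail bound (Condition A, second part, for the REM):
there is a constant `C > 0` such that for all `n ≥ 1`, `u > 0` and `d > 0`,
`P(exp(β_n √n Z) ≥ u^{1/α_n} d g_n) ≤ C b_n / (u d^{α_n})`, where
`g_n = exp(α_n β_n² n)` and `b_n = (α_n β_n √(2πn) exp(α_n² β_n² n/2))⁻¹`. -/
theorem rem_condition_A_bound (α β : ℕ → ℝ) (hα : ∀ n, 0 < α n) (hβ : ∀ n, 0 < β n) :
    ∃ C : ℝ, 0 < C ∧ ∀ n : ℕ, 0 < n → ∀ u d : ℝ, 0 < u → 0 < d →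
      (ProbabilityTheory.gaussianReal 0 1)
          {z : ℝ | u ^ (1 / α n) * d * Real.exp (α n * β n ^ 2 * n) ≤
            Real.exp (β n * Real.sqrt n * z)}
        ≤ ENNReal.ofReal (C *
            (α n * β n * Real.sqrt (2 * Real.pi * n) *
                Real.exp (α n ^ 2 * β n ^ 2 * n / 2))⁻¹ / (u * d ^ α n)) := by
  refine ⟨10, by norm_num, ?_⟩
  intro n hn u d hu hd
  set a := α n with ha'
  set b := β n with hb'
  have han : 0 < a := hα n
  have hbn : 0 < b := hβ n
  have hn0 : (0:ℝ) < (n:ℝ) := by exact_mod_cast hn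
  have hsn : 0 < Real.sqrt n := Real.sqrt_pos.2 hn0
  set σ := b * Real.sqrt (n:ℝ) with hσ'
  have hσ : 0 < σ := mul_pos hbn hsn
  set t := Real.log u / a + Real.log d with ht'
  set x := a * σ with hx'
  have hxpos : 0 < x := mul_pos han hσ
  have hσ2 : σ^2 = b^2 * n := by
    rw [hσ', mul_pow, Real.sq_sqrt hn0.le]
  set v := (t + a * σ^2) / σ with hv'
  clear_value a b σ t x v
  have hvσ : v * σ = t + a * σ^2 := by
    rw [hv', div_mul_cancel₀ _ hσ.ne']
  have hat : a * t = x*v - x^2 := by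
    rw [hx']; linear_combination (-a) * hvσ
  have hx2 : x^2 = a^2*b^2*(n:ℝ) := by
    rw [hx', mul_pow, hσ2]; ring
  -- event = Ici v
  have hset : {z : ℝ | u ^ (1 / a) * d * Real.exp (a * b ^ 2 * n) ≤ Real.exp (σ * z)}
      = Set.Ici v := by
    ext z
    simp only [Set.mem_setOf_eq, Set.mem_Ici]
    rw [← Real.log_le_iff_le_exp (by positivity),
      Real.log_mul (by positivity) (Real.exp_pos _).ne',
      Real.log_mul (by positivity) hd.ne',
      Real.log_rpow hu, Real.log_exp]
    rw [hv', div_le_iff₀ hσ]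
    have harg : 1/a * Real.log u + Real.log d + a*b^2*(n:ℝ) = t + a*σ^2 := by
      rw [ht', hσ2]; ring
    rw [harg, mul_comm σ z]
  -- rewrite RHS denominator pieces
  have hud : u * d ^ a = Real.exp (a * t) := by
    rw [show a*t = Real.log u + Real.log d * a by rw [ht']; field_simp,
      Real.exp_add, Real.exp_log hu, ← Real.rpow_def_of_pos hd]
  have hkey : a * b * Real.sqrt (2*Real.pi*(n:ℝ)) = x * Real.sqrt (2*Real.pi) := by
    rw [hx', hσ', Real.sqrt_mul (by positivity) (n:ℝ)]; ring
  have hexparg : a^2 * b^2 * (n:ℝ)/2 = x^2/2 := by rw [hx2]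
  rw [hset, hkey, hexparg, hud]
  -- now goal: gaussianReal 0 1 (Ici v) ≤ ofReal (10 * (x*√(2π)*exp(x²/2))⁻¹ / exp(a t))
  have hE : (0:ℝ) < x * Real.sqrt (2*Real.pi) * Real.exp (x^2/2) := by positivity
  rcases le_or_gt v 1 with hv1 | hv1
  · -- trivial bound
    refine le_trans prob_le_one ?_
    rw [ENNReal.one_le_ofReal]
    rw [le_div_iff₀ (Real.exp_pos _), one_mul, ← div_eq_mul_inv, le_div_iff₀ hE]
    have hea : Real.exp (a*t) * Real.exp (x^2/2) = Real.exp (x*v - x^2/2) := by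
      rw [← Real.exp_add]; congr 1; linear_combination hat
    calc Real.exp (a*t) * (x * Real.sqrt (2*Real.pi) * Real.exp (x^2/2))
        = x * Real.sqrt (2*Real.pi) * Real.exp (x*v - x^2/2) := by rw [← hea]; ring
      _ ≤ 10 := key1 hxpos hv1
  · -- tail bound
    have hv0 : 0 < v := lt_trans one_pos hv1
    rw [ProbabilityTheory.gaussianReal_apply_eq_integral 0 one_ne_zero]
    apply ENNReal.ofReal_le_ofReal
    refine le_trans (gauss_tail_bound v hv0) ?_
    rw [← div_eq_mul_inv, div_div,
      div_le_div_iff₀ (by positivity) (by positivity)]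
    have hcomb : Real.exp (-v^2/2) * Real.exp (x^2/2) * Real.exp (a*t)
        = Real.exp (-(x-v)^2/2) := by
      rw [← Real.exp_add, ← Real.exp_add]; congr 1; linear_combination hat
    calc Real.exp (-v^2/2) * (x * Real.sqrt (2*Real.pi) * Real.exp (x^2/2) * Real.exp (a*t))
        = Real.sqrt (2*Real.pi) * (x * Real.exp (-(x-v)^2/2)) := by rw [← hcomb]; ring
      _ ≤ Real.sqrt (2*Real.pi) * (10*v) :=
          mul_le_mul_of_nonneg_left (key2 hxpos hv1) (Real.sqrt_nonneg _)
      _ = 10 * (Real.sqrt (2*Real.pi) * v) := by ring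
end

section
/- Let α ∈ (0,1), λ > 0, D > 0. Then Σ_{j=1}^∞ exp(-2^{jα} λ D) ≤ exp(-2^α λ D) + exp(-2^α λ D) / (α (log 2) 2^α λ D). -/
open Filter

/-- Integral-comparison bound for the series `Σ_{j≥1} exp(-2^{jα} λ D)`:
it is at most `exp(-2^α λ D) + exp(-2^α λ D)/(α (log 2) 2^α λ D)`. -/
theorem sum_exp_double_exp_bound (α lam D : ℝ) (hα0 : 0 < α) (hα1 : α < 1)
    (hlam : 0 < lam) (hD : 0 < D) :
    ∑' j : ℕ, Real.exp (-((2:ℝ) ^ (((j : ℝ) + 1) * α) * (lam * D))) ≤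
      Real.exp (-((2:ℝ) ^ α * (lam * D))) +
        Real.exp (-((2:ℝ) ^ α * (lam * D))) /
          (α * Real.log 2 * (2:ℝ) ^ α * lam * D) := by
  have hc0 : (0:ℝ) < lam * D := mul_pos hlam hD
  set b : ℝ := (2:ℝ) ^ α * (lam * D) with hbdef
  have hb0 : 0 < b := mul_pos (Real.rpow_pos_of_pos two_pos α) hc0
  have hlog2 : 0 < Real.log 2 := Real.log_pos (by norm_num)
  set β : ℝ := α * Real.log 2 * b with hβdef
  have hβ0 : 0 < β := by positivity
  set r : ℝ := Real.exp (-β) with hrdef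
  have hr0 : 0 ≤ r := (Real.exp_pos _).le
  have hr1 : r < 1 := by
    rw [hrdef]; exact Real.exp_lt_one_iff.2 (by linarith)
  have key : ∀ j : ℕ, Real.exp (-((2:ℝ) ^ (((j : ℝ) + 1) * α) * (lam * D)))
      ≤ Real.exp (-b) * r ^ j := by
    intro j
    rw [hrdef, ← Real.exp_nat_mul, ← Real.exp_add]
    apply Real.exp_le_exp.2
    have h2 : (2:ℝ) ^ (((j:ℝ)+1)*α) = (2:ℝ)^α * (2:ℝ)^((j:ℝ)*α) := by
      rw [← Real.rpow_add two_pos]; ring_nf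
    have h3 : 1 + Real.log 2 * ((j:ℝ)*α) ≤ (2:ℝ)^((j:ℝ)*α) := by
      rw [Real.rpow_def_of_pos two_pos]
      linarith [Real.add_one_le_exp (Real.log 2 * ((j:ℝ)*α))]
    have hj0 : (0:ℝ) ≤ (j:ℝ) := Nat.cast_nonneg j
    have h2a : (0:ℝ) < (2:ℝ)^α := Real.rpow_pos_of_pos two_pos α
    rw [h2, hbdef, hβdef, hbdef]
    nlinarith [mul_pos h2a hc0]
  have hsumg : Summable (fun j : ℕ => Real.exp (-b) * r ^ j) :=
    (summable_geometric_of_lt_one hr0 hr1).mul_left _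
  have hsumL : Summable (fun j : ℕ =>
      Real.exp (-((2:ℝ) ^ (((j : ℝ) + 1) * α) * (lam * D)))) :=
    Summable.of_nonneg_of_le (fun j => (Real.exp_pos _).le) key hsumg
  have hrle : r ≤ (1 + β)⁻¹ := by
    rw [hrdef, Real.exp_neg]
    exact inv_anti₀ (by linarith) (by linarith [Real.add_one_le_exp β])
  have h1r : β / (1 + β) ≤ 1 - r := by
    have : 1 - (1+β)⁻¹ = β/(1+β) := by field_simp; ring
    linarith [this.symm.le]
  have h1r0 : 0 < 1 - r := by linarith
  have hinv : (1 - r)⁻¹ ≤ (1 + β) / β := by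
    have := inv_anti₀ (by positivity : (0:ℝ) < β/(1+β)) h1r
    rwa [inv_div] at this
  calc ∑' j : ℕ, Real.exp (-((2:ℝ) ^ (((j : ℝ) + 1) * α) * (lam * D)))
      ≤ ∑' j : ℕ, Real.exp (-b) * r ^ j := Summable.tsum_le_tsum key hsumL hsumg
    _ = Real.exp (-b) * (1 - r)⁻¹ := by
        rw [tsum_mul_left, tsum_geometric_of_lt_one hr0 hr1]
    _ ≤ Real.exp (-b) + Real.exp (-b) / (α * Real.log 2 * (2:ℝ)^α * lam * D) := by
        have hden : α * Real.log 2 * (2:ℝ)^α * lam * D = β := by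
          rw [hβdef, hbdef]; ring
        rw [hden]
        have h := mul_le_mul_of_nonneg_left hinv (Real.exp_pos (-b)).le
        have heq : Real.exp (-b) * ((1 + β)/β) = Real.exp (-b) + Real.exp (-b)/β := by
          field_simp; ring
        linarith [heq.le]
end
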